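/- arXiv:1108.2579 — 2 statements merged into one kernel-verified Lean document; each statement's English description precedes it below -/
import Mathlib

section
/- Let m ≥ 2 be an integer and a ≥ 1 an integer with gcd(a, m) = 1. Then, as an identity of rational numbers, C_m(a) = −(a^{λ(m)} / (a·m·B_{λ(m)})) · Σ_{j=0}^{a−1} ( B_{λ(m)}(j/a) − B_{λ(m)} ), where B_n denotes the n-th Bernoulli number and B_n(x) the n-th Bernoulli polynomial. -/
open PowerSeries Finset

section helpers

lemma exp_sub_one_ne_zero' : (exp ℚ - 1) ≠ 0 := by
  intro h
  have := congrArg (PowerSeries.coeff 1) h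
  simp [PowerSeries.coeff_exp] at this

lemma raabe' (n : ℕ) (a : ℕ) (ha : 0 < a) :
    ∑ j ∈ Finset.range a, (Polynomial.bernoulli n).eval ((j : ℚ)/a) =
      (a : ℚ) * (1/(a:ℚ))^n * bernoulli n := by
  have haQ : (a : ℚ) ≠ 0 := Nat.cast_ne_zero.mpr ha.ne'
  set y : ℚ⟦X⟧ := rescale (1/(a:ℚ)) (exp ℚ) with hy
  set R : ℚ⟦X⟧ := rescale (1/(a:ℚ)) (bernoulliPowerSeries ℚ) with hR
  set G : ℚ⟦X⟧ := ∑ j ∈ range a, rescale ((j:ℚ)/a) (exp ℚ) with hG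
  have hGy : G = ∑ j ∈ range a, y ^ j := by
    apply Finset.sum_congr rfl
    intro j _
    rw [hy, ← map_pow, exp_pow_eq_rescale_exp, rescale_rescale, mul_one_div]
  have hya : y ^ a = exp ℚ := by
    rw [hy, ← map_pow, exp_pow_eq_rescale_exp, rescale_rescale, mul_one_div,
      div_self haQ, rescale_one, RingHom.id_apply]
  have hkey : exp ℚ - 1 = G * (y - 1) := by
    rw [hGy, geom_sum_mul, hya]
  have hRy : R * (y - 1) = PowerSeries.C (1/(a:ℚ)) * X := by
    have hy1 : y - 1 = rescale (1/(a:ℚ)) (exp ℚ - 1) := by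
      rw [map_sub, map_one, hy]
    rw [hR, hy1, ← map_mul, bernoulliPowerSeries_mul_exp_sub_one]
    ext k
    simp only [coeff_rescale, PowerSeries.coeff_X, PowerSeries.coeff_C_mul]
    rcases eq_or_ne k 1 with rfl | hk
    · simp
    · simp [hk]
  have h1 : (∑ j ∈ range a, (PowerSeries.mk fun k =>
        Polynomial.aeval ((j:ℚ)/a) (((1 : ℚ) / (k.factorial : ℚ)) • Polynomial.bernoulli k))) * (exp ℚ - 1)
      = PowerSeries.X * G := by
    rw [Finset.sum_mul, hG, Finset.mul_sum]
    exact Finset.sum_congr rfl fun j _ => Polynomial.bernoulli_generating_function ((j:ℚ)/a)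
  have h2 : (((a:ℚ)) • R) * (exp ℚ - 1) = PowerSeries.X * G := by
    rw [PowerSeries.smul_eq_C_mul, hkey]
    calc PowerSeries.C (a:ℚ) * R * (G * (y - 1))
        = PowerSeries.C (a:ℚ) * (R * (y - 1)) * G := by ring
      _ = PowerSeries.C (a:ℚ) * (PowerSeries.C (1/(a:ℚ)) * X) * G := by rw [hRy]
      _ = PowerSeries.X * G := by
          rw [← mul_assoc, ← map_mul, mul_one_div, div_self haQ, map_one, one_mul]
  have h3 : (∑ j ∈ range a, (PowerSeries.mk fun k =>
        Polynomial.aeval ((j:ℚ)/a) (((1 : ℚ) / (k.factorial : ℚ)) • Polynomial.bernoulli k)))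
      = ((a:ℚ)) • R :=
    mul_right_cancel₀ exp_sub_one_ne_zero' (h1.trans h2.symm)
  have h4 := congrArg (PowerSeries.coeff n) h3
  simp only [map_sum, coeff_mk, PowerSeries.coeff_smul, hR, coeff_rescale,
    bernoulliPowerSeries, coeff_mk, smul_eq_mul, Algebra.algebraMap_self, RingHom.id_apply,
    map_smul, Polynomial.aeval_def, Polynomial.eval₂_eq_eval_map, Polynomial.map_id,
    one_div] at h4
  rw [← Finset.mul_sum] at h4
  have hfac : ((n.factorial : ℚ))⁻¹ ≠ 0 := by
    simp [Nat.factorial_ne_zero]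
  apply mul_left_cancel₀ hfac
  rw [h4, one_div]
  rw [div_eq_mul_inv]
  ring

lemma bernoulli_even_ne_zero' {n : ℕ} (he : Even n) (hn : n ≠ 0) : bernoulli n ≠ 0 := by
  obtain ⟨k, hk⟩ := he
  have hk' : n = 2 * k := by omega
  have hk0 : k ≠ 0 := by omega
  subst hk'
  intro h
  have hs := hasSum_zeta_nat hk0
  rw [h] at hs
  simp only [Rat.cast_zero, mul_zero, zero_div] at hs
  have h2 : (1 : ℝ) / ((1 : ℕ) : ℝ) ^ (2 * k) ≤ 0 :=
    le_hasSum hs 1 (fun j _ => by positivity)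
  simp at h2
  linarith

end helpers

/-- The Carmichael function `λ(m)`: the smallest positive integer `n` such that
`a ^ n ≡ 1 (mod m)` for every integer `a` coprime to `m`. -/
noncomputable def carmichael (m : ℕ) : ℕ :=
  sInf {n : ℕ | 0 < n ∧ ∀ a : ℤ, Int.gcd a m = 1 → a ^ n ≡ 1 [ZMOD (m : ℤ)]}

/-- The Carmichael quotient `C_m(a) = (a^{λ(m)} - 1) / m`. -/
noncomputable def carQuot (m : ℕ) (a : ℤ) : ℤ := (a ^ carmichael m - 1) / m

lemma carmichael_mem (m : ℕ) (hm : 2 ≤ m) :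
    0 < carmichael m ∧ ∀ a : ℤ, Int.gcd a m = 1 → a ^ carmichael m ≡ 1 [ZMOD (m : ℤ)] := by
  have : NeZero m := ⟨by omega⟩
  have hne : {n : ℕ | 0 < n ∧ ∀ a : ℤ, Int.gcd a m = 1 → a ^ n ≡ 1 [ZMOD (m : ℤ)]}.Nonempty := by
    refine ⟨m.totient, Nat.totient_pos.mpr (by omega), fun b hb => ?_⟩
    have hunit : IsUnit ((b : ZMod m)) := by
      have h1 : Nat.Coprime b.natAbs m := hb
      have h2 : IsUnit ((b.natAbs : ℕ) : ZMod m) := (ZMod.isUnit_iff_coprime _ _).mpr h1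
      rcases Int.natAbs_eq b with h | h
      · rw [h, Int.cast_natCast]; exact h2
      · rw [h, Int.cast_neg, Int.cast_natCast]; exact h2.neg
    obtain ⟨u, hu⟩ := hunit
    have hpow : (b : ZMod m) ^ m.totient = 1 := by
      rw [← hu, ← Units.val_pow_eq_pow_val, ZMod.pow_totient u, Units.val_one]
    rw [← ZMod.intCast_eq_intCast_iff]
    push_cast
    exact hpow
  exact Nat.sInf_mem hne

lemma carmichael_two : carmichael 2 = 1 := by
  have hpos := (carmichael_mem 2 le_rfl).1
  have h1 : carmichael 2 ≤ 1 := by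
    apply Nat.sInf_le
    refine ⟨one_pos, fun b hb => ?_⟩
    have hnd : ¬ (2:ℤ) ∣ b := by
      intro hd
      have : Int.gcd b 2 = 2 := by
        rw [Int.gcd]
        obtain ⟨c, rfl⟩ := hd
        simp [Int.natAbs_mul]
      simp only [Nat.cast_ofNat] at hb
      omega
    rw [pow_one]
    show b % ((2:ℕ):ℤ) = 1 % ((2:ℕ):ℤ)
    push_cast
    omega
  omega

lemma carmichael_even (m : ℕ) (hm : 3 ≤ m) : Even (carmichael m) := by
  have h := (carmichael_mem m (by omega)).2 (-1) (by simp)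
  rcases Nat.even_or_odd (carmichael m) with he | ho
  · exact he
  · exfalso
    rw [ho.neg_one_pow] at h
    have hd : (m : ℤ) ∣ 2 := by
      have := h.dvd
      norm_num at this
      exact this
    have hm2 : m ∣ 2 := by exact_mod_cast hd
    have := Nat.le_of_dvd (by norm_num) hm2
    omega

lemma bernoulli_carmichael_ne_zero (m : ℕ) (hm : 2 ≤ m) : bernoulli (carmichael m) ≠ 0 := by
  rcases eq_or_lt_of_le hm with h2 | h3
  · rw [← h2, carmichael_two, bernoulli_one]
    norm_num
  · exact bernoulli_even_ne_zero' (carmichael_even m h3) (carmichael_mem m hm).1.ne'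

theorem stmt11 (m : ℕ) (hm : 2 ≤ m) (a : ℕ) (ha1 : 1 ≤ a) (ha : Nat.Coprime a m) :
    (carQuot m a : ℚ) =
      -((a : ℚ) ^ carmichael m / ((a : ℚ) * m * bernoulli (carmichael m))) *
        ∑ j ∈ Finset.range a,
          ((Polynomial.bernoulli (carmichael m)).eval ((j : ℚ) / a) -
            bernoulli (carmichael m)) := by
  obtain ⟨hnpos, hall⟩ := carmichael_mem m hm
  set n := carmichael m with hn
  have hB := bernoulli_carmichael_ne_zero m hm
  rw [← hn] at hB
  have haQ : (a:ℚ) ≠ 0 := Nat.cast_ne_zero.mpr (by omega)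
  have hmQ : (m:ℚ) ≠ 0 := Nat.cast_ne_zero.mpr (by omega)
  have hgcd : Int.gcd (a:ℤ) (m:ℤ) = 1 := by
    rw [Int.gcd_natCast_natCast]; exact ha
  have hdvd : (m:ℤ) ∣ (a:ℤ)^n - 1 := by
    have h := (hall a hgcd).dvd
    rw [show (1 - (a:ℤ)^n) = -((a:ℤ)^n - 1) by ring, dvd_neg] at h
    exact h
  obtain ⟨k, hk⟩ := hdvd
  have hq : carQuot m a = k := by
    rw [carQuot, ← hn, hk, Int.mul_ediv_cancel_left _ (by exact_mod_cast (by omega : m ≠ 0))]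
  have hkQ : (m:ℚ) * k = (a:ℚ)^n - 1 := by
    have := congrArg (fun x : ℤ => (x : ℚ)) hk
    push_cast at this
    linarith
  rw [hq, Finset.sum_sub_distrib, raabe' n a (by omega), Finset.sum_const,
    Finset.card_range, nsmul_eq_mul]
  have h1 : (1/(a:ℚ))^n = ((a:ℚ)^n)⁻¹ := by rw [one_div, inv_pow]
  rw [h1]
  have hPne : ((a:ℚ))^n ≠ 0 := pow_ne_zero _ haQ
  field_simp
  linear_combination hkQ
end

section
/- Let p be an odd prime and a an integer with gcd(a, p) = 1. For any integers i, j with 1 ≤ i ≤ j, one has C_{p^j}(a) ≡ C_{p^i}(a) (mod p^i). Moreover, for integers i, j with 3 ≤ i ≤ j and any odd integer a, one has C_{2^j}(a) ≡ C_{2^i}(a) (mod 2^{i−1}). -/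
lemma carmichael_cond (m : ℕ) [NeZero m] (n : ℕ) :
    (∀ a : ℤ, Int.gcd a m = 1 → a ^ n ≡ 1 [ZMOD (m : ℤ)]) ↔
      (∀ u : (ZMod m)ˣ, u ^ n = 1) := by
  constructor
  · intro h u
    have hc : Nat.Coprime ((u : ZMod m).val) m := ZMod.val_coe_unit_coprime u
    have h1 : Int.gcd ((u : ZMod m).val : ℤ) m = 1 := by
      rw [Int.gcd_natCast_natCast]; exact hc
    have h2 := h _ h1
    have h3 : ((((u : ZMod m).val : ℤ) ^ n : ℤ) : ZMod m) = ((1 : ℤ) : ZMod m) :=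
      (ZMod.intCast_eq_intCast_iff _ _ _).mpr h2
    push_cast at h3
    rw [ZMod.natCast_val, ZMod.cast_id] at h3
    ext
    push_cast
    exact h3
  · intro h a ha
    have hc : IsCoprime a (m : ℤ) := Int.isCoprime_iff_gcd_eq_one.mpr ha
    have hu : IsUnit ((a : ℤ) : ZMod m) := by
      have := hc.map (Int.castRingHom (ZMod m))
      simpa [isCoprime_zero_right] using this
    rw [← ZMod.intCast_eq_intCast_iff]
    push_cast
    obtain ⟨u, hu⟩ := hu
    rw [← hu, ← Units.val_pow_eq_pow_val, h u, Units.val_one]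

lemma carmichael_eq_exponent (m : ℕ) [NeZero m] :
    carmichael m = Monoid.exponent (ZMod m)ˣ := by
  have hE : 0 < Monoid.exponent (ZMod m)ˣ := Monoid.ExponentExists.of_finite.exponent_pos
  have hset : {n : ℕ | 0 < n ∧ ∀ a : ℤ, Int.gcd a m = 1 → a ^ n ≡ 1 [ZMOD (m : ℤ)]}
      = {n : ℕ | 0 < n ∧ Monoid.exponent (ZMod m)ˣ ∣ n} := by
    ext n
    simp only [Set.mem_setOf_eq, carmichael_cond, Monoid.exponent_dvd_iff_forall_pow_eq_one]
  rw [carmichael, hset]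
  apply le_antisymm
  · exact Nat.sInf_le ⟨hE, dvd_rfl⟩
  · have hne : {n : ℕ | 0 < n ∧ Monoid.exponent (ZMod m)ˣ ∣ n}.Nonempty :=
      ⟨_, hE, dvd_rfl⟩
    obtain ⟨hpos, hdvd⟩ := Nat.sInf_mem hne
    exact Nat.le_of_dvd hpos hdvd



lemma pow_expand (n : ℕ) (x : ℤ) :
    ∃ c : ℤ, (1 + x) ^ n = 1 + n * x + (n.choose 2) * x ^ 2 + x ^ 3 * c := by
  induction n with
  | zero => exact ⟨0, by simp⟩
  | succ n ih =>
    obtain ⟨c, hc⟩ := ih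
    refine ⟨c + (n.choose 2 : ℤ) + c * x, ?_⟩
    have h2 : ((n+1).choose 2 : ℤ) = n.choose 2 + n := by
      rw [Nat.choose_succ_succ]
      push_cast [Nat.choose_one_right]
      ring
    rw [pow_succ, hc, h2]
    push_cast
    ring

lemma one_add_p_pow (p : ℕ) (hp : p.Prime) (hp2 : p ≠ 2) (m : ℕ) :
    ∃ u : ℤ, ((1 : ℤ) + p) ^ (p ^ m) = 1 + (p : ℤ) ^ (m + 1) * (1 + p * u) := by
  induction m with
  | zero => exact ⟨0, by push_cast; ring⟩
  | succ m ih =>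
    obtain ⟨u, hu⟩ := ih
    obtain ⟨d, hd⟩ : (p : ℤ) ∣ (p.choose 2 : ℕ) := by
      exact_mod_cast Int.natCast_dvd_natCast.mpr
        (hp.dvd_choose_self (by norm_num) (by
          rcases hp.two_le.lt_or_eq with h | h
          · exact h
          · exact absurd h.symm hp2))
    refine ⟨u + p ^ m * d * (1 + p * u) ^ 2 + p ^ (2 * m) * (1 + p * u) ^ 3 *
        (Classical.choose (pow_expand p ((p : ℤ) ^ (m + 1) * (1 + p * u)))), ?_⟩
    have hc := Classical.choose_spec (pow_expand p ((p : ℤ) ^ (m + 1) * (1 + p * u)))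
    set c := Classical.choose (pow_expand p ((p : ℤ) ^ (m + 1) * (1 + p * u)))
    have : ((1 : ℤ) + p) ^ (p ^ (m + 1)) = (((1 : ℤ) + p) ^ (p ^ m)) ^ p := by
      rw [← pow_mul, pow_succ]
    rw [this, hu, hc, hd]
    ring

lemma three_pow_two_pow (m : ℕ) (hm : 1 ≤ m) :
    ∃ u : ℤ, Odd u ∧ (3 : ℤ) ^ (2 ^ m) = 1 + 2 ^ (m + 2) * u := by
  induction m with
  | zero => omega
  | succ m ih =>
    rcases Nat.eq_or_lt_of_le hm with h | h
    · exact ⟨1, odd_one, by rw [← h]; norm_num⟩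
    · obtain ⟨u, hou, hu⟩ := ih (by omega)
      refine ⟨u + 2 ^ (m + 1) * u ^ 2, ?_, ?_⟩
      · rcases hou with ⟨t, ht⟩
        exact ⟨t + 2 ^ m * u ^ 2, by rw [ht]; ring⟩
      · have : (3 : ℤ) ^ (2 ^ (m + 1)) = ((3 : ℤ) ^ (2 ^ m)) ^ 2 := by
          rw [← pow_mul, pow_succ]
        rw [this, hu]
        ring

lemma odd_sq_dvd (a : ℤ) (ha : Odd a) (k : ℕ) (hk : 3 ≤ k) :
    (2 : ℤ) ^ k ∣ a ^ (2 ^ (k - 2)) - 1 := by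
  induction k with
  | zero => omega
  | succ k ih =>
    rcases Nat.eq_or_lt_of_le hk with h | h
    · -- k + 1 = 3 : a^2 ≡ 1 mod 8
      obtain ⟨t, ht⟩ := ha
      rcases Int.even_or_odd t with ⟨s, hs⟩ | ⟨s, hs⟩
      · refine ⟨s * (2*s + 1) , ?_⟩
        rw [← h]; norm_num; rw [ht, hs]; ring
      · refine ⟨(2*s+1) * (s + 1), ?_⟩
        rw [← h]; norm_num; rw [ht, hs]; ring
    · have hk' : 3 ≤ k := by omega
      obtain ⟨c, hc⟩ := ih hk'
      have h2 : (2 : ℤ) ∣ a ^ (2 ^ (k - 2)) + 1 := by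
        rcases (ha.pow (n := 2 ^ (k-2))) with ⟨t, ht⟩
        exact ⟨t + 1, by rw [ht]; ring⟩
      obtain ⟨d, hd⟩ := h2
      have hkk : k + 1 - 2 = (k - 2) + 1 := by omega
      have : a ^ (2 ^ (k + 1 - 2)) - 1
          = (a ^ (2 ^ (k - 2)) - 1) * (a ^ (2 ^ (k - 2)) + 1) := by
        rw [hkk, pow_succ, pow_mul]; ring
      rw [this, hc, hd, pow_succ]
      exact ⟨c * d, by ring⟩



lemma units_pow_eq_one_of_int_dvd {m : ℕ} [NeZero m] (u : (ZMod m)ˣ) (n : ℕ)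
    (h : (m : ℤ) ∣ ((u : ZMod m).val : ℤ) ^ n - 1) : u ^ n = 1 := by
  have h3 : ((((u : ZMod m).val : ℤ) ^ n - 1 : ℤ) : ZMod m) = 0 :=
    (ZMod.intCast_zmod_eq_zero_iff_dvd _ _).mpr h
  push_cast at h3
  rw [ZMod.natCast_val, ZMod.cast_id] at h3
  ext
  push_cast
  linear_combination h3

lemma exponent_two_pow (k : ℕ) (hk : 3 ≤ k) :
    Monoid.exponent (ZMod (2 ^ k))ˣ = 2 ^ (k - 2) := by
  haveI : NeZero (2 ^ k) := ⟨pow_ne_zero _ two_ne_zero⟩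
  have hupper : ∀ u : (ZMod (2 ^ k))ˣ, u ^ (2 ^ (k - 2)) = 1 := by
    intro u
    apply units_pow_eq_one_of_int_dvd
    have hc : Nat.Coprime ((u : ZMod (2 ^ k)).val) (2 ^ k) := ZMod.val_coe_unit_coprime u
    have hodd : Odd (((u : ZMod (2 ^ k)).val : ℤ)) := by
      have h2 : ¬ (2 ∣ (u : ZMod (2 ^ k)).val) := by
        intro h2
        have := Nat.dvd_gcd h2 (dvd_pow_self 2 (by omega : k ≠ 0))
        rw [hc] at this
        omega
      rw [Int.odd_iff]
      omega
    exact_mod_cast odd_sq_dvd _ hodd k hk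
  -- the unit 3
  have hcop : Nat.Coprime 3 (2 ^ k) := by
    apply Nat.Coprime.pow_right
    decide
  set u3 : (ZMod (2 ^ k))ˣ := ZMod.unitOfCoprime 3 hcop with hu3
  have hval : ((u3 : ZMod (2 ^ k)) : ZMod (2 ^ k)) = ((3 : ℕ) : ZMod (2 ^ k)) :=
    ZMod.coe_unitOfCoprime 3 hcop
  have horder : orderOf u3 = 2 ^ (k - 2) := by
    have hk2 : k - 2 = (k - 3) + 1 := by omega
    rw [hk2]
    apply orderOf_eq_prime_pow
    · -- u3 ^ 2 ^ (k-3) ≠ 1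
      intro h1
      have h2 : (((3 : ℤ) ^ (2 ^ (k - 3)) : ℤ) : ZMod (2 ^ k)) = ((1 : ℤ) : ZMod (2 ^ k)) := by
        push_cast
        rw [show (3 : ZMod (2^k)) = (u3 : ZMod (2^k)) from by rw [hval]; push_cast; ring]
        rw [← Units.val_pow_eq_pow_val, h1, Units.val_one]
      rw [ZMod.intCast_eq_intCast_iff] at h2
      have hdvd : ((2 : ℤ) ^ k) ∣ (3 : ℤ) ^ (2 ^ (k - 3)) - 1 := by
        have := Int.ModEq.dvd h2
        push_cast at this ⊢
        exact (dvd_sub_comm).mp this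
      rcases Nat.eq_or_lt_of_le hk with h3 | h3
      · rw [← h3] at hdvd
        norm_num at hdvd
      · obtain ⟨w, hw, h3p⟩ := three_pow_two_pow (k - 3) (by omega)
        rw [h3p] at hdvd
        have : ((k - 3) + 2) = k - 1 := by omega
        rw [this] at hdvd
        simp only [add_sub_cancel_left] at hdvd
        have h2k : (2:ℤ) ^ k = 2 ^ (k-1) * 2 := by
          rw [← pow_succ]; congr 1; omega
        rw [h2k] at hdvd
        have := (mul_dvd_mul_iff_left (a := (2:ℤ)^(k-1)) (by positivity)).mp hdvd
        rcases hw with ⟨t, ht⟩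
        omega
    · rw [← hk2]; exact hupper u3
  apply Nat.dvd_antisymm
  · exact Monoid.exponent_dvd_of_forall_pow_eq_one hupper
  · rw [← horder]; exact Monoid.order_dvd_exponent u3



lemma exponent_odd_prime_pow (p k : ℕ) (hp : p.Prime) (hp2 : p ≠ 2) (hk : 1 ≤ k) :
    Monoid.exponent (ZMod (p ^ k))ˣ = p ^ (k - 1) * (p - 1) := by
  haveI : Fact p.Prime := ⟨hp⟩
  haveI : NeZero (p ^ k) := ⟨pow_ne_zero _ hp.pos.ne'⟩
  have hodd : 3 ≤ p := by
    rcases hp.two_le.lt_or_eq with h | h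
    · omega
    · exact absurd h.symm hp2
  -- upper bound
  have hupper : Monoid.exponent (ZMod (p ^ k))ˣ ∣ p ^ (k - 1) * (p - 1) := by
    have h1 := Group.exponent_dvd_card (G := (ZMod (p ^ k))ˣ)
    rwa [ZMod.card_units_eq_totient, Nat.totient_prime_pow hp hk] at h1
  -- (p - 1) divides exponent
  have hB : (p - 1) ∣ Monoid.exponent (ZMod (p ^ k))ˣ := by
    have hdvd : p ∣ p ^ k := dvd_pow_self p (by omega)
    obtain ⟨g, hg⟩ := IsCyclic.exists_generator (α := (ZMod p)ˣ)
    have hgord : orderOf g = p - 1 := by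
      rw [orderOf_eq_card_of_forall_mem_zpowers hg, Nat.card_eq_fintype_card,
        ZMod.card_units_eq_totient, Nat.totient_prime hp]
    obtain ⟨v, hv⟩ := ZMod.unitsMap_surjective hdvd g
    calc (p - 1) = orderOf g := hgord.symm
      _ ∣ orderOf v := by rw [← hv]; exact orderOf_map_dvd _ v
      _ ∣ _ := Monoid.order_dvd_exponent v
  -- p ^ (k - 1) divides exponent
  have hA : p ^ (k - 1) ∣ Monoid.exponent (ZMod (p ^ k))ˣ := by
    rcases Nat.eq_or_lt_of_le hk with h1 | h1
    · rw [← h1]; simp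
    · -- k ≥ 2, use 1 + p
      have hcop : Nat.Coprime (1 + p) (p ^ k) :=
        Nat.Coprime.pow_right _ (by simpa using (Nat.coprime_add_mul_right_left 1 p 1).mpr (Nat.coprime_one_left p))
      set u : (ZMod (p ^ k))ˣ := ZMod.unitOfCoprime (1 + p) hcop with hu
      have hval : (u : ZMod (p ^ k)) = ((1 + p : ℕ) : ZMod (p ^ k)) :=
        ZMod.coe_unitOfCoprime _ hcop
      have key : ∀ m : ℕ, (u ^ (p ^ m) = 1) ↔
          ((p : ℤ) ^ k ∣ ((1 : ℤ) + p) ^ (p ^ m) - 1) := by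
        intro m
        rw [Units.ext_iff, Units.val_pow_eq_pow_val, Units.val_one, hval]
        push_cast
        rw [show ((1 : ZMod (p^k)) + p) = (((1 + (p:ℤ)) : ℤ) : ZMod (p^k)) by push_cast; ring]
        rw [← Int.cast_pow, show (1 : ZMod (p^k)) = ((1 : ℤ) : ZMod (p^k)) by push_cast; ring,
          ZMod.intCast_eq_intCast_iff]
        constructor
        · intro h
          have := Int.ModEq.dvd h
          push_cast at this ⊢
          exact (dvd_sub_comm).mp this
        · intro h
          have h2 : (((p ^ k : ℕ)) : ℤ) ∣ ((1:ℤ) + p) ^ (p ^ m) - 1 := by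
            push_cast
            exact h
          exact Int.ModEq.symm (Int.modEq_iff_dvd.mpr h2)
      have horder : orderOf u = p ^ (k - 1) := by
        have hk2 : k - 1 = (k - 2) + 1 := by omega
        rw [hk2]
        apply orderOf_eq_prime_pow
        · rw [key]
          intro hdvd
          obtain ⟨w, hw⟩ := one_add_p_pow p hp hp2 (k - 2)
          rw [hw] at hdvd
          simp only [add_sub_cancel_left] at hdvd
          have hke : (k - 2) + 1 = k - 1 := by omega
          rw [hke] at hdvd
          have h2k : (p:ℤ) ^ k = p ^ (k-1) * p := by
            rw [← pow_succ]; congr 1; omega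
          rw [h2k] at hdvd
          have hpd := (mul_dvd_mul_iff_left (a := (p:ℤ)^(k-1))
            (by positivity)).mp hdvd
          -- p ∣ 1 + p * w, contradiction
          obtain ⟨t, ht⟩ := hpd
          have : (p:ℤ) ∣ 1 := ⟨t - w, by linarith⟩
          have := Int.le_of_dvd one_pos this
          omega
        · rw [← hk2, key]
          obtain ⟨w, hw⟩ := one_add_p_pow p hp hp2 (k - 1)
          rw [hw]
          simp only [add_sub_cancel_left]
          have : (k - 1) + 1 = k := by omega
          rw [this]
          exact dvd_mul_right _ _
      rw [← horder]
      exact Monoid.order_dvd_exponent u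
  have hcop : Nat.Coprime (p ^ (k - 1)) (p - 1) := by
    apply Nat.Coprime.pow_left
    have hpe : p = 1 + 1 * (p - 1) := by omega
    nth_rewrite 1 [hpe]
    exact (Nat.coprime_add_mul_right_left 1 (p-1) 1).mpr (Nat.coprime_one_left _)
  exact Nat.dvd_antisymm hupper (hcop.mul_dvd_of_dvd_of_dvd hA hB)



lemma pow_carmichael (m : ℕ) [NeZero m] (a : ℤ) (h : Int.gcd a m = 1) :
    (m : ℤ) ∣ a ^ carmichael m - 1 := by
  have hmem : a ^ carmichael m ≡ 1 [ZMOD (m : ℤ)] := by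
    rw [carmichael_eq_exponent]
    exact ((carmichael_cond m _).mpr (fun u => Monoid.pow_exponent_eq_one u)) a h
  exact dvd_sub_comm.mp (Int.ModEq.dvd hmem)

lemma carQuot_exact (m : ℕ) [NeZero m] (a : ℤ) (h : Int.gcd a m = 1) :
    a ^ carmichael m = 1 + (m : ℤ) * carQuot m a := by
  have := Int.mul_ediv_cancel' (pow_carmichael m a h)
  rw [carQuot, this]
  ring

lemma carmichael_odd_prime_pow (p k : ℕ) (hp : p.Prime) (hp2 : p ≠ 2) (hk : 1 ≤ k) :
    carmichael (p ^ k) = p ^ (k - 1) * (p - 1) := by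
  haveI : NeZero (p ^ k) := ⟨pow_ne_zero _ hp.pos.ne'⟩
  rw [carmichael_eq_exponent, exponent_odd_prime_pow p k hp hp2 hk]

lemma carmichael_two_pow (k : ℕ) (hk : 3 ≤ k) :
    carmichael (2 ^ k) = 2 ^ (k - 2) := by
  haveI : NeZero (2 ^ k) := ⟨pow_ne_zero _ two_ne_zero⟩
  rw [carmichael_eq_exponent, exponent_two_pow k hk]

lemma gcd_pow_eq_one {a : ℤ} {p : ℕ} (h : Int.gcd a p = 1) (k : ℕ) :
    Int.gcd a ((p ^ k : ℕ) : ℤ) = 1 := by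
  rw [← Int.isCoprime_iff_gcd_eq_one] at h ⊢
  push_cast
  exact h.pow_right

lemma step_odd (p : ℕ) (hp : p.Prime) (hp2 : p ≠ 2) (a : ℤ) (ha : Int.gcd a p = 1)
    (j : ℕ) (hj : 1 ≤ j) :
    ∃ D : ℤ, carQuot (p ^ (j + 1)) a = carQuot (p ^ j) a + (p : ℤ) ^ j * D := by
  haveI : NeZero (p ^ j) := ⟨pow_ne_zero _ hp.pos.ne'⟩
  haveI : NeZero (p ^ (j + 1)) := ⟨pow_ne_zero _ hp.pos.ne'⟩
  obtain ⟨j', rfl⟩ : ∃ j', j = j' + 1 := ⟨j - 1, by omega⟩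
  set C := carQuot (p ^ (j' + 1)) a with hC
  have h1 : a ^ carmichael (p ^ (j' + 1)) = 1 + ((p ^ (j' + 1) : ℕ) : ℤ) * C :=
    carQuot_exact _ a (gcd_pow_eq_one ha _)
  have hlam : carmichael (p ^ (j' + 1 + 1)) = p * carmichael (p ^ (j' + 1)) := by
    rw [carmichael_odd_prime_pow p _ hp hp2 (by omega),
      carmichael_odd_prime_pow p _ hp hp2 (by omega)]
    simp only [Nat.add_sub_cancel]
    rw [← mul_assoc, ← pow_succ']
  obtain ⟨d, hd⟩ : (p : ℤ) ∣ (p.choose 2 : ℕ) := by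
    exact_mod_cast Int.natCast_dvd_natCast.mpr
      (hp.dvd_choose_self (by norm_num) (by
        rcases hp.two_le.lt_or_eq with h | h
        · exact h
        · exact absurd h.symm hp2))
  obtain ⟨c, hc⟩ := pow_expand p ((p : ℤ) ^ (j' + 1) * C)
  have key : a ^ carmichael (p ^ (j' + 1 + 1)) =
      1 + ((p ^ (j' + 1 + 1) : ℕ) : ℤ) *
        (C + (p : ℤ) ^ (j' + 1) * (d * C ^ 2 + (p : ℤ) ^ j' * C ^ 3 * c)) := by
    rw [hlam, pow_mul', h1]
    push_cast
    rw [show ((1 : ℤ) + (p:ℤ)^(j'+1) * C) = 1 + ((p:ℤ)^(j'+1) * C) by ring, hc, hd]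
    push_cast
    ring
  refine ⟨d * C ^ 2 + (p : ℤ) ^ j' * C ^ 3 * c, ?_⟩
  have hne : ((p ^ (j' + 1 + 1) : ℕ) : ℤ) ≠ 0 :=
    Int.natCast_ne_zero.mpr (pow_ne_zero _ hp.pos.ne')
  rw [carQuot, key]
  rw [show (1 : ℤ) + ((p ^ (j' + 1 + 1) : ℕ) : ℤ) * _ - 1
    = ((p ^ (j' + 1 + 1) : ℕ) : ℤ) * (C + (p : ℤ) ^ (j' + 1) * (d * C ^ 2 + (p : ℤ) ^ j' * C ^ 3 * c)) by ring,
    Int.mul_ediv_cancel_left _ hne]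



lemma gcd_two_of_odd {a : ℤ} (ha : Odd a) : Int.gcd a (2 : ℕ) = 1 := by
  rw [← Int.isCoprime_iff_gcd_eq_one]
  obtain ⟨t, ht⟩ := ha
  exact ⟨1, -t, by push_cast; linarith⟩

lemma step_two (a : ℤ) (ha : Odd a) (j : ℕ) (hj : 3 ≤ j) :
    ∃ D : ℤ, carQuot (2 ^ (j + 1)) a = carQuot (2 ^ j) a + (2 : ℤ) ^ (j - 1) * D := by
  haveI : NeZero ((2 : ℕ) ^ j) := ⟨pow_ne_zero _ two_ne_zero⟩
  haveI : NeZero ((2 : ℕ) ^ (j + 1)) := ⟨pow_ne_zero _ two_ne_zero⟩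
  set C := carQuot (2 ^ j) a with hC
  have h1 : a ^ carmichael (2 ^ j) = 1 + (((2 : ℕ) ^ j : ℕ) : ℤ) * C :=
    carQuot_exact _ a (gcd_pow_eq_one (gcd_two_of_odd ha) _)
  have hlam : carmichael (2 ^ (j + 1)) = 2 * carmichael (2 ^ j) := by
    rw [carmichael_two_pow _ (by omega), carmichael_two_pow _ (by omega)]
    rw [show j + 1 - 2 = (j - 2) + 1 by omega, pow_succ']
  obtain ⟨j', rfl⟩ : ∃ j', j = j' + 1 := ⟨j - 1, by omega⟩
  have key : a ^ carmichael (2 ^ (j' + 1 + 1)) =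
      1 + (((2 : ℕ) ^ (j' + 1 + 1) : ℕ) : ℤ) * (C + (2 : ℤ) ^ j' * C ^ 2) := by
    rw [hlam, pow_mul', h1]
    push_cast
    ring
  refine ⟨C ^ 2, ?_⟩
  have hne : (((2 : ℕ) ^ (j' + 1 + 1) : ℕ) : ℤ) ≠ 0 := by push_cast; positivity
  rw [carQuot, key, show (1 : ℤ) + (((2:ℕ) ^ (j' + 1 + 1) : ℕ) : ℤ) * _ - 1
    = (((2:ℕ) ^ (j' + 1 + 1) : ℕ) : ℤ) * (C + (2 : ℤ) ^ j' * C ^ 2) by ring,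
    Int.mul_ediv_cancel_left _ hne]
  simp only [Nat.add_sub_cancel]

theorem stmt13 :
    (∀ p : ℕ, p.Prime → p ≠ 2 → ∀ a : ℤ, Int.gcd a p = 1 →
      ∀ i j : ℕ, 1 ≤ i → i ≤ j →
        carQuot (p ^ j) a ≡ carQuot (p ^ i) a [ZMOD ((p : ℤ) ^ i)]) ∧
    (∀ a : ℤ, Odd a → ∀ i j : ℕ, 3 ≤ i → i ≤ j →
      carQuot (2 ^ j) a ≡ carQuot (2 ^ i) a [ZMOD ((2 : ℤ) ^ (i - 1))]) := by
  constructor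
  · intro p hp hp2 a ha i j hi hij
    induction j, hij using Nat.le_induction with
    | base => rfl
    | succ j hij ih =>
      refine Int.ModEq.trans ?_ ih
      obtain ⟨D, hD⟩ := step_odd p hp hp2 a ha j (by omega)
      have hdvd : ((p : ℤ) ^ i) ∣ carQuot (p ^ j) a - carQuot (p ^ (j + 1)) a := by
        rw [hD, show carQuot (p^j) a - (carQuot (p^j) a + (p:ℤ)^j * D)
          = (p:ℤ)^j * (-D) by ring]
        exact dvd_mul_of_dvd_left (pow_dvd_pow _ hij) _
      exact Int.modEq_iff_dvd.mpr hdvd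
  · intro a ha i j hi hij
    induction j, hij using Nat.le_induction with
    | base => rfl
    | succ j hij ih =>
      refine Int.ModEq.trans ?_ ih
      obtain ⟨D, hD⟩ := step_two a ha j (by omega)
      have hdvd : ((2 : ℤ) ^ (i - 1)) ∣ carQuot (2 ^ j) a - carQuot (2 ^ (j + 1)) a := by
        rw [hD, show carQuot (2^j) a - (carQuot (2^j) a + (2:ℤ)^(j-1) * D)
          = (2:ℤ)^(j-1) * (-D) by ring]
        exact dvd_mul_of_dvd_left (pow_dvd_pow _ (by omega)) _
      exact Int.modEq_iff_dvd.mpr hdvd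
end
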